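/- Let c > b > a ≥ 2 be pairwise coprime, ℓ = c·b⁻¹ mod a with ℓ > ⌊c/b⌋. Then g(a,b,c) = max over x in {1,...,a-1} of ( min over t in {0,...,a-1} of b·((x + (a-ℓ)t) mod a) + c·t ) minus a. -/

import Mathlib

-- L1: congruence of the candidate values
lemma fm_cong (a b c ℓ x t : ℕ) (hℓa : ℓ < a) (hℓ : b * ℓ % a = c % a) :
    b * ((x + (a - ℓ) * t) % a) + c * t ≡ b * x [MOD a] := by
  have hbl : b * ℓ ≡ c [MOD a] := hℓ
  have h1 : b * ((x + (a - ℓ) * t) % a) + c * t ≡ b * (x + (a - ℓ) * t) + c * t [MOD a] :=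
    (((Nat.mod_modEq _ a).mul_left b)).add_right _
  have hc : b * (x + (a - ℓ) * t) + c * t ≡ b * (x + (a - ℓ) * t) + b * ℓ * t [MOD a] :=
    (hbl.symm.mul_right t).add_left _
  have eqn : b * (x + (a - ℓ) * t) + b * ℓ * t = b * x + a * (b * t) := by
    have h' : (a - ℓ) * t + ℓ * t = a * t := by
      rw [← add_mul, Nat.sub_add_cancel hℓa.le]
    calc b * (x + (a - ℓ) * t) + b * ℓ * t
        = b * (x + ((a - ℓ) * t + ℓ * t)) := by ring
      _ = b * (x + a * t) := by rw [h']
      _ = b * x + a * (b * t) := by ring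
  have h2 : b * x + a * (b * t) ≡ b * x + 0 [MOD a] :=
    Nat.ModEq.add_left _ ((Nat.modEq_zero_iff_dvd).mpr ⟨b * t, rfl⟩)
  calc b * ((x + (a - ℓ) * t) % a) + c * t
      ≡ b * (x + (a - ℓ) * t) + c * t [MOD a] := h1
    _ ≡ b * (x + (a - ℓ) * t) + b * ℓ * t [MOD a] := hc
    _ = b * x + a * (b * t) := eqn
    _ ≡ b * x + 0 [MOD a] := h2
    _ = b * x := by ring

-- L2: any b*y+c*z congruent to b*x is at least the corresponding candidate
lemma fm_lb (a b c ℓ x : ℕ) (ha : 2 ≤ a) (hℓa : ℓ < a) (hℓ : b * ℓ % a = c % a)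
    (cab : Nat.Coprime a b) (hx : x < a) (y z : ℕ)
    (hyz : b * y + c * z ≡ b * x [MOD a]) :
    b * ((x + (a - ℓ) * (z % a)) % a) + c * (z % a) ≤ b * y + c * z := by
  set t := z % a with ht
  set y' := y % a with hy'
  have h1 : b * y' + c * t ≡ b * y + c * z [MOD a] :=
    ((Nat.mod_modEq y a).mul_left b).add ((Nat.mod_modEq z a).mul_left c)
  have h2 := fm_cong a b c ℓ x t hℓa hℓ
  have h3 : b * y' + c * t ≡ b * ((x + (a - ℓ) * t) % a) + c * t [MOD a] :=
    (h1.trans hyz).trans h2.symm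
  have h4 : b * y' ≡ b * ((x + (a - ℓ) * t) % a) [MOD a] :=
    Nat.ModEq.add_right_cancel' _ h3
  have h5 : y' ≡ (x + (a - ℓ) * t) % a [MOD a] :=
    Nat.ModEq.cancel_left_of_coprime (show Nat.gcd a b = 1 from cab) h4
  have hy'a : y' < a := Nat.mod_lt _ (by omega)
  have hta : (x + (a - ℓ) * t) % a < a := Nat.mod_lt _ (by omega)
  have h6 : y' = (x + (a - ℓ) * t) % a := by
    have := h5
    unfold Nat.ModEq at this
    rwa [Nat.mod_eq_of_lt hy'a, Nat.mod_eq_of_lt hta] at this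
  rw [← h6]
  have := Nat.mod_le y a
  have := Nat.mod_le z a
  have : b * y' ≤ b * y := Nat.mul_le_mul_left b (Nat.mod_le y a)
  have : c * t ≤ c * z := Nat.mul_le_mul_left c (Nat.mod_le z a)
  omega

theorem frobenius_minmax (a b c ℓ g : ℕ)
    (ha : 2 ≤ a) (hab : a < b) (hbc : b < c)
    (cab : Nat.Coprime a b) (cac : Nat.Coprime a c) (cbc : Nat.Coprime b c)
    (hℓa : ℓ < a) (hℓ : b * ℓ % a = c % a)
    (hk : c / b < ℓ)
    (hg : IsGreatest {n : ℕ | 0 < n ∧ ¬ ∃ x y z : ℕ, n = a * x + b * y + c * z} g) :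
    g + a = Finset.sup (Finset.Ico 1 a) (fun x =>
      Finset.inf' (Finset.range a)
        (Finset.nonempty_range_iff.mpr (by omega : a ≠ 0))
        (fun t => b * ((x + (a - ℓ) * t) % a) + c * t)) := by
  have hane : (Finset.range a).Nonempty := Finset.nonempty_range_iff.mpr (by omega)
  set f : ℕ → ℕ → ℕ := fun x t => b * ((x + (a - ℓ) * t) % a) + c * t with hf
  set M : ℕ → ℕ := fun x => Finset.inf' (Finset.range a)
      (Finset.nonempty_range_iff.mpr (by omega : a ≠ 0)) (f x) with hM
  -- the goal is g + a = sup M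
  apply le_antisymm
  · -- g + a ≤ sup
    -- g is positive and not representable
    obtain ⟨⟨hgpos, hgnr⟩, hgub⟩ := hg
    have hga : g % a ≠ 0 := by
      intro h
      have hdvd : a ∣ g := Nat.dvd_of_mod_eq_zero h
      exact hgnr ⟨g / a, 0, 0, by rw [Nat.mul_div_cancel' hdvd]; ring⟩
    -- find x with b*x ≡ g [MOD a]
    obtain ⟨binv, -, hbinv⟩ := Nat.exists_mul_mod_eq_one_of_coprime cab.symm (by omega)
    set x := binv * g % a with hx
    have hxa : x < a := Nat.mod_lt _ (by omega)
    have hbx : b * x ≡ g [MOD a] := by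
      calc b * x ≡ b * (binv * g) [MOD a] := (Nat.mod_modEq _ a).mul_left b
        _ = (b * binv) * g := by ring
        _ ≡ 1 * g [MOD a] := Nat.ModEq.mul_right g
            (show b * binv ≡ 1 [MOD a] by
              unfold Nat.ModEq
              rw [Nat.mod_eq_of_lt (by omega : 1 < a)]
              exact hbinv)
        _ = g := by ring
    have hx1 : 1 ≤ x := by
      rcases Nat.eq_zero_or_pos x with h0 | h; swap; exact h
      exfalso
      apply hga
      have : b * x ≡ 0 [MOD a] := by rw [h0, Nat.mul_zero]
      have := (this.symm.trans hbx)
      unfold Nat.ModEq at this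
      simpa using this.symm
    have hxmem : x ∈ Finset.Ico 1 a := Finset.mem_Ico.mpr ⟨hx1, hxa⟩
    have hMx : g + a ≤ M x := by
      obtain ⟨t₀, ht₀mem, ht₀⟩ := Finset.exists_mem_eq_inf' (s := Finset.range a)
        (Finset.nonempty_range_iff.mpr (by omega : a ≠ 0)) (f x)
      by_contra hlt
      push_neg at hlt
      have hMv : M x = b * ((x + (a - ℓ) * t₀) % a) + c * t₀ := ht₀
      have hcong : M x ≡ g [MOD a] := by
        rw [hMv]
        exact (fm_cong a b c ℓ x t₀ hℓa hℓ).trans hbx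
      rcases le_or_gt (M x) g with hle | hgt
      · -- g = M x + a*u, representable
        have hdvd : a ∣ g - M x := (Nat.modEq_iff_dvd' hle).mp hcong
        obtain ⟨u, hu⟩ := hdvd
        apply hgnr
        refine ⟨u, (x + (a - ℓ) * t₀) % a, t₀, ?_⟩
        omega
      · have hdvd : a ∣ M x - g := (Nat.modEq_iff_dvd' hgt.le).mp hcong.symm
        have := Nat.le_of_dvd (by omega) hdvd
        omega
    calc g + a ≤ M x := hMx
      _ ≤ _ := Finset.le_sup hxmem
  · -- sup ≤ g + a
    apply Finset.sup_le
    intro x hxmem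
    obtain ⟨hx1, hxa⟩ := Finset.mem_Ico.mp hxmem
    obtain ⟨t₀, ht₀mem, ht₀⟩ := Finset.exists_mem_eq_inf' (s := Finset.range a)
      (Finset.nonempty_range_iff.mpr (by omega : a ≠ 0)) (f x)
    have ht₀a : t₀ < a := Finset.mem_range.mp ht₀mem
    have hMval : M x = b * ((x + (a - ℓ) * t₀) % a) + c * t₀ := ht₀
    -- M x > a
    have hMbig : a < M x := by
      rcases Nat.eq_zero_or_pos t₀ with h0 | hpos
      · rw [hMval, h0]
        simp [Nat.mod_eq_of_lt hxa]
        nlinarith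
      · rw [hMval]
        have h1 : c ≤ c * t₀ := Nat.le_mul_of_pos_right c hpos
        omega
    -- M x - a is positive and not representable, hence ≤ g
    have hnr : ¬ ∃ u y z : ℕ, M x - a = a * u + b * y + c * z := by
      rintro ⟨u, y, z, huvz⟩
      have hsum : b * y + c * z + (a * u + a) = M x := by omega
      have hcong : b * y + c * z ≡ b * x [MOD a] := by
        have h1 : b * y + c * z + (a * u + a) ≡ b * y + c * z + 0 [MOD a] :=
          Nat.ModEq.add_left _ ((Nat.modEq_zero_iff_dvd).mpr ⟨u + 1, by ring⟩)
        have h2 : M x ≡ b * x [MOD a] := by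
          rw [hMval]; exact fm_cong a b c ℓ x t₀ hℓa hℓ
        calc b * y + c * z = b * y + c * z + 0 := by ring
          _ ≡ b * y + c * z + (a * u + a) [MOD a] := h1.symm
          _ = M x := hsum
          _ ≡ b * x [MOD a] := h2
      have hge := fm_lb a b c ℓ x ha hℓa hℓ cab hxa y z hcong
      have hle : M x ≤ b * ((x + (a - ℓ) * (z % a)) % a) + c * (z % a) :=
        Finset.inf'_le _ (Finset.mem_range.mpr (Nat.mod_lt _ (by omega : 0 < a)))
      omega
    have := hg.2 (Set.mem_setOf.mpr ⟨by omega, hnr⟩)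
    omega
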